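/- Let u ∈ (3/4, 1), η ∈ (0, 2u − 1), K > 0, and w_t = t^{−u} for integers t ≥ 1. Let (e_t)_{t≥1} be nonnegative reals with e_t ≤ K·t^{2(u−1)−η} for all t ≥ 1, and define ē_1 = e_1 and ē_t = (1 − w_t)·ē_{t−1} + w_t·e_t. Then there exists a constant C > 0 such that w_t·(ē_{t−1} + e_t) ≤ C·t^{−1−η} for all t ≥ 2; in particular the series ∑_{t≥2} w_t·(ē_{t−1} + e_t) converges. -/

import Mathlib

/-- Subadditivity of `x ^ p` on nonneg reals for `0 ≤ p ≤ 1`. -/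
lemma my_rpow_add_le {x y p : ℝ} (hx : 0 ≤ x) (hy : 0 ≤ y) (hp : 0 ≤ p) (hp1 : p ≤ 1) :
    (x + y) ^ p ≤ x ^ p + y ^ p := by
  have h := NNReal.rpow_add_le_add_rpow x.toNNReal y.toNNReal hp hp1
  have h' : ((x.toNNReal + y.toNNReal : NNReal) : ℝ) ^ p
      ≤ ((x.toNNReal : ℝ)) ^ p + ((y.toNNReal : ℝ)) ^ p := by
    exact_mod_cast h
  rwa [NNReal.coe_add, Real.coe_toNNReal _ hx, Real.coe_toNNReal _ hy] at h'

lemma my_bernoulli {x p : ℝ} (hx : 1 ≤ x) (hp0 : 0 ≤ p) (hp1 : p ≤ 1) :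
    (x - 1) ^ p ≤ x ^ p - p * x ^ (p - 1) := by
  have hx0 : (0:ℝ) < x := lt_of_lt_of_le one_pos hx
  have hs : -1 ≤ -1/x := by
    rw [neg_div]
    simp only [neg_le_neg_iff]
    rw [div_le_one hx0]; linarith
  have hb := rpow_one_add_le_one_add_mul_self hs hp0 hp1
  have hfac : x - 1 = x * (1 + -1/x) := by field_simp; ring
  have h1 : (0:ℝ) ≤ 1 + -1/x := by
    have h01 : -1/x ≤ 0 := div_nonpos_of_nonpos_of_nonneg (by norm_num) hx0.le
    nlinarith [hs]
  have hxp : x ^ (p - 1) = x ^ p / x := by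
    rw [Real.rpow_sub hx0, Real.rpow_one]
  calc (x - 1) ^ p = (x * (1 + -1/x)) ^ p := by rw [← hfac]
    _ = x ^ p * (1 + -1/x) ^ p := Real.mul_rpow hx0.le h1
    _ ≤ x ^ p * (1 + p * (-1/x)) := by
        apply mul_le_mul_of_nonneg_left hb (Real.rpow_nonneg hx0.le p)
    _ = x ^ p - p * (x ^ p / x) := by ring
    _ = x ^ p - p * x ^ (p - 1) := by rw [hxp]

/-- Summability of the perturbation terms: if `e_t ≤ K t^{2(u−1)−η}` and `ē_t` are the
`w_t = t^{−u}` recursive averages, then `w_t (ē_{t−1} + e_t) ≤ C t^{−1−η}`, so the series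
`∑_{t≥2} w_t (ē_{t−1} + e_t)` converges. -/
theorem perturbation_summable
    (u η K : ℝ) (hu : 3 / 4 < u) (hu1 : u < 1) (hη0 : 0 < η) (hη1 : η < 2 * u - 1)
    (hK : 0 < K)
    (w : ℕ → ℝ) (hw : ∀ t, w t = (t : ℝ) ^ (-u))
    (e : ℕ → ℝ) (he0 : ∀ t, 0 ≤ e t)
    (hebd : ∀ t : ℕ, 1 ≤ t → e t ≤ K * (t : ℝ) ^ (2 * (u - 1) - η))
    (ebar : ℕ → ℝ) (h1 : ebar 1 = e 1)
    (hrec : ∀ t, 2 ≤ t → ebar t = (1 - w t) * ebar (t - 1) + w t * e t) :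
    (∃ C > 0, ∀ t : ℕ, 2 ≤ t →
      w t * (ebar (t - 1) + e t) ≤ C * (t : ℝ) ^ (-1 - η)) ∧
    Summable (fun t : ℕ => w (t + 2) * (ebar (t + 1) + e (t + 2))) := by
  set p : ℝ := 2 * u - 1 - η with hp_def
  have hp0 : 0 < p := by simp only [hp_def]; linarith
  have hp1 : p ≤ 1 := by simp only [hp_def]; linarith
  have hexp : 2 * (u - 1) - η = p - 1 := by simp only [hp_def]; ring
  have hu0 : 0 < u := by linarith
  -- sum bound
  have hS : ∀ t : ℕ, 1 ≤ t → (∑ i ∈ Finset.Icc 1 t, e i) ≤ K / p * (t:ℝ) ^ p := by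
    intro t ht
    induction t, ht using Nat.le_induction with
    | base =>
        simp only [Finset.Icc_self, Finset.sum_singleton, Nat.cast_one, Real.one_rpow, mul_one]
        have h := hebd 1 le_rfl
        simp only [Nat.cast_one, Real.one_rpow, mul_one] at h
        have hKp : K ≤ K / p := by
          rw [le_div_iff₀ hp0]; nlinarith
        linarith
    | succ t ht ih =>
        rw [Finset.sum_Icc_succ_top (by omega)]
        have hx1 : (1:ℝ) ≤ (t:ℝ) + 1 := by
          have : (0:ℝ) ≤ (t:ℝ) := Nat.cast_nonneg t
          linarith
        have hb := my_bernoulli hx1 hp0.le hp1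
        have hcast : ((t:ℝ) + 1) - 1 = (t:ℝ) := by ring
        rw [hcast] at hb
        have het := hebd (t+1) (by omega)
        rw [hexp] at het
        push_cast at het ⊢
        have hmul : K * ((t:ℝ) + 1) ^ (p - 1) ≤ K / p * (((t:ℝ)+1) ^ p - (t:ℝ) ^ p) := by
          rw [div_mul_eq_mul_div, le_div_iff₀ hp0]
          nlinarith [hb, hK.le]
        linarith
  -- sums are nonneg
  have hSnn : ∀ t : ℕ, 0 ≤ ∑ i ∈ Finset.Icc 1 t, e i :=
    fun t => Finset.sum_nonneg (fun i _ => he0 i)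
  -- w bounds
  have hwpos : ∀ t : ℕ, 1 ≤ t → 0 < w t := by
    intro t ht
    rw [hw]
    apply Real.rpow_pos_of_pos
    exact_mod_cast Nat.pos_of_ne_zero (by omega)
  have hwle1 : ∀ t : ℕ, 1 ≤ t → w t ≤ 1 := by
    intro t ht
    rw [hw]
    exact Real.rpow_le_one_of_one_le_of_nonpos (by exact_mod_cast ht) (by linarith)
  -- key inequality (A)
  have hA : ∀ t : ℕ, 1 ≤ t → (1 - w (t+1)) * w t ≤ w (t+1) := by
    intro t ht
    have hx1 : (1:ℝ) ≤ (t:ℝ) := by exact_mod_cast ht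
    have hx0 : (0:ℝ) < (t:ℝ) := by linarith
    have hx10 : (0:ℝ) < (t:ℝ) + 1 := by linarith
    have hsub := my_rpow_add_le (x := (t:ℝ)) (y := 1) hx0.le zero_le_one hu0.le hu1.le
    rw [Real.one_rpow] at hsub
    have hbpos : (0:ℝ) < (t:ℝ) ^ u := Real.rpow_pos_of_pos hx0 u
    have hapos : (0:ℝ) < ((t:ℝ)+1) ^ u := Real.rpow_pos_of_pos hx10 u
    have key : (((t:ℝ)+1) ^ u - 1) ≤ (t:ℝ) ^ u := by linarith
    rw [hw, hw]
    push_cast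
    rw [Real.rpow_neg hx10.le, Real.rpow_neg hx0.le]
    have h2 : (1 - (((t:ℝ)+1) ^ u)⁻¹) * ((t:ℝ) ^ u)⁻¹ * (((t:ℝ)+1) ^ u * (t:ℝ) ^ u)
        ≤ (((t:ℝ)+1) ^ u)⁻¹ * (((t:ℝ)+1) ^ u * (t:ℝ) ^ u) := by
      have e1 : (1 - (((t:ℝ)+1) ^ u)⁻¹) * ((t:ℝ) ^ u)⁻¹ * (((t:ℝ)+1) ^ u * (t:ℝ) ^ u)
          = ((t:ℝ)+1) ^ u - 1 := by
        field_simp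
      have e2 : (((t:ℝ)+1) ^ u)⁻¹ * (((t:ℝ)+1) ^ u * (t:ℝ) ^ u) = (t:ℝ) ^ u := by
        field_simp
      rw [e1, e2]; exact key
    exact le_of_mul_le_mul_right h2 (by positivity)
  -- ebar upper bound
  have hE : ∀ t : ℕ, 1 ≤ t → ebar t ≤ w t * ∑ i ∈ Finset.Icc 1 t, e i := by
    intro t ht
    induction t, ht using Nat.le_induction with
    | base =>
        simp only [Finset.Icc_self, Finset.sum_singleton, h1, hw, Nat.cast_one, Real.one_rpow,
          one_mul, le_refl]
    | succ t ht ih =>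
        have hr := hrec (t+1) (by omega)
        simp only [Nat.add_sub_cancel] at hr
        rw [hr, Finset.sum_Icc_succ_top (by omega)]
        have h1w : 0 ≤ 1 - w (t+1) := by linarith [hwle1 (t+1) (by omega)]
        have step1 : (1 - w (t+1)) * ebar t ≤ (1 - w (t+1)) * (w t * ∑ i ∈ Finset.Icc 1 t, e i) :=
          mul_le_mul_of_nonneg_left ih h1w
        have step2 : (1 - w (t+1)) * (w t * ∑ i ∈ Finset.Icc 1 t, e i)
            ≤ w (t+1) * ∑ i ∈ Finset.Icc 1 t, e i := by
          rw [← mul_assoc]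
          exact mul_le_mul_of_nonneg_right (hA t ht) (hSnn t)
        calc (1 - w (t+1)) * ebar t + w (t+1) * e (t+1)
            ≤ w (t+1) * ∑ i ∈ Finset.Icc 1 t, e i + w (t+1) * e (t+1) := by linarith
          _ = w (t+1) * (∑ i ∈ Finset.Icc 1 t, e i + e (t+1)) := by ring
  -- ebar nonneg
  have hEnn : ∀ t : ℕ, 1 ≤ t → 0 ≤ ebar t := by
    intro t ht
    induction t, ht using Nat.le_induction with
    | base => rw [h1]; exact he0 1
    | succ t ht ih =>
        have hr := hrec (t+1) (by omega)
        simp only [Nat.add_sub_cancel] at hr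
        rw [hr]
        have h1w : 0 ≤ 1 - w (t+1) := by linarith [hwle1 (t+1) (by omega)]
        exact add_nonneg (mul_nonneg h1w ih)
          (mul_nonneg (hwpos (t+1) (by omega)).le (he0 (t+1)))
  -- the constant
  set C : ℝ := K / p * 2 ^ (1 + η - u) + K with hC_def
  have h2p : (0:ℝ) < 2 ^ (1 + η - u) := Real.rpow_pos_of_pos two_pos _
  have hCpos : 0 < C := by positivity
  have main : ∀ t : ℕ, 2 ≤ t → w t * (ebar (t - 1) + e t) ≤ C * (t : ℝ) ^ (-1 - η) := by
    intro t ht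
    have hx2 : (2:ℝ) ≤ (t:ℝ) := by exact_mod_cast ht
    have hx0 : (0:ℝ) < (t:ℝ) := by linarith
    have hcast : ((t - 1 : ℕ) : ℝ) = (t:ℝ) - 1 := by
      have h1t : 1 ≤ t := by omega
      push_cast [Nat.cast_sub h1t]
      ring
    have hs0 : (0:ℝ) < (t:ℝ) - 1 := by linarith
    -- bound on ebar (t-1)
    have hE1 : ebar (t-1) ≤ K / p * ((t:ℝ) - 1) ^ (p - u) := by
      have h := le_trans (hE (t-1) (by omega))
        (mul_le_mul_of_nonneg_left (hS (t-1) (by omega)) (hwpos (t-1) (by omega)).le)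
      rw [hw, hcast] at h
      calc ebar (t-1) ≤ ((t:ℝ) - 1) ^ (-u) * (K / p * ((t:ℝ) - 1) ^ p) := h
        _ = K / p * (((t:ℝ) - 1) ^ (-u) * ((t:ℝ) - 1) ^ p) := by ring
        _ = K / p * ((t:ℝ) - 1) ^ (-u + p) := by rw [← Real.rpow_add hs0]
        _ = K / p * ((t:ℝ) - 1) ^ (p - u) := by rw [show -u + p = p - u from by ring]
    have hpu : p - u ≤ 0 := by simp only [hp_def]; linarith
    have ht2 : (t:ℝ)/2 ≤ (t:ℝ) - 1 := by linarith
    have hhalf : ((t:ℝ) - 1) ^ (p - u) ≤ ((t:ℝ)/2) ^ (p - u) :=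
      Real.rpow_le_rpow_of_nonpos (by linarith) ht2 hpu
    have hsplit : ((t:ℝ)/2) ^ (p - u) = (t:ℝ) ^ (p - u) / 2 ^ (p - u) :=
      Real.div_rpow hx0.le (by norm_num : (0:ℝ) ≤ 2) (p - u)
    have h2pow : (2:ℝ) ^ (p - u) = (2 ^ (1 + η - u))⁻¹ := by
      rw [← Real.rpow_neg (by norm_num : (0:ℝ) ≤ 2)]
      congr 1
      simp only [hp_def]; ring
    have hwt : w t = (t:ℝ) ^ (-u) := hw t
    have hwnn : 0 ≤ w t := (hwpos t (by omega)).le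
    have hterm1 : w t * ebar (t-1) ≤ K / p * 2 ^ (1 + η - u) * (t:ℝ) ^ (-1 - η) := by
      have hebnn : ebar (t-1) ≤ K / p * 2 ^ (1 + η - u) * (t:ℝ) ^ (p - u) := by
        calc ebar (t-1) ≤ K / p * ((t:ℝ) - 1) ^ (p - u) := hE1
          _ ≤ K / p * (((t:ℝ)/2) ^ (p - u)) := by
              apply mul_le_mul_of_nonneg_left hhalf
              positivity
          _ = K / p * 2 ^ (1 + η - u) * (t:ℝ) ^ (p - u) := by
              rw [hsplit, h2pow]; field_simp
      calc w t * ebar (t-1) ≤ (t:ℝ) ^ (-u) * (K / p * 2 ^ (1 + η - u) * (t:ℝ) ^ (p - u)) := by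
            rw [← hwt]
            exact mul_le_mul_of_nonneg_left hebnn hwnn
        _ = K / p * 2 ^ (1 + η - u) * ((t:ℝ) ^ (-u) * (t:ℝ) ^ (p - u)) := by ring
        _ = K / p * 2 ^ (1 + η - u) * (t:ℝ) ^ (-u + (p - u)) := by rw [← Real.rpow_add hx0]
        _ = K / p * 2 ^ (1 + η - u) * (t:ℝ) ^ (-1 - η) := by
            rw [show -u + (p - u) = -1 - η from by simp only [hp_def]; ring]
    have hterm2 : w t * e t ≤ K * (t:ℝ) ^ (-1 - η) := by
      have het := hebd t (by omega)
      rw [hexp] at het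
      calc w t * e t ≤ (t:ℝ) ^ (-u) * (K * (t:ℝ) ^ (p - 1)) := by
            rw [← hwt]; exact mul_le_mul_of_nonneg_left het hwnn
        _ = K * ((t:ℝ) ^ (-u) * (t:ℝ) ^ (p - 1)) := by ring
        _ = K * (t:ℝ) ^ (-u + (p - 1)) := by rw [← Real.rpow_add hx0]
        _ ≤ K * (t:ℝ) ^ (-1 - η) := by
            apply mul_le_mul_of_nonneg_left _ hK.le
            apply Real.rpow_le_rpow_of_exponent_le (by linarith)
            simp only [hp_def]; linarith
    calc w t * (ebar (t-1) + e t) = w t * ebar (t-1) + w t * e t := by ring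
      _ ≤ K / p * 2 ^ (1 + η - u) * (t:ℝ) ^ (-1 - η) + K * (t:ℝ) ^ (-1 - η) := by
          linarith
      _ = C * (t:ℝ) ^ (-1 - η) := by rw [hC_def]; ring
  refine ⟨⟨C, hCpos, main⟩, ?_⟩
  have hsum1 : Summable (fun n : ℕ => ((n:ℝ)) ^ (-1 - η)) :=
    Real.summable_nat_rpow.mpr (by linarith)
  have hsum2 : Summable (fun n : ℕ => C * ((n + 2 : ℕ):ℝ) ^ (-1 - η)) :=
    ((summable_nat_add_iff 2).mpr hsum1).mul_left C
  apply Summable.of_nonneg_of_le _ _ hsum2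
  · intro t
    exact mul_nonneg (hwpos (t+2) (by omega)).le
      (add_nonneg (hEnn (t+1) (by omega)) (he0 (t+2)))
  · intro t
    exact main (t+2) (by omega)
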